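/- For a permutation π of {1,…,n} chosen uniformly at random, the expected number of Nash equilibria of the permutation game (I, I^π) equals n. Equivalently, with c(π) denoting the number of orbits of π on {1,…,n}, one has ∑_{π ∈ S_n} (2^{c(π)} − 1) = n · n!. -/

import Mathlib

open Matrix BigOperators

/-- A mixed strategy: nonnegative entries summing to 1. -/
def IsMixed {I : Type*} [Fintype I] (x : I → ℝ) : Prop :=
  (∀ i, 0 ≤ x i) ∧ ∑ i, x i = 1

/-- `(x, y)` is a Nash equilibrium of the bimatrix game `(A, B)`. -/
def IsNash {I J : Type*} [Fintype I] [Fintype J]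
    (A B : Matrix I J ℝ) (x : I → ℝ) (y : J → ℝ) : Prop :=
  IsMixed x ∧ IsMixed y ∧
  (∀ x' : I → ℝ, IsMixed x' → x' ⬝ᵥ (A *ᵥ y) ≤ x ⬝ᵥ (A *ᵥ y)) ∧
  (∀ y' : J → ℝ, IsMixed y' → x ⬝ᵥ (B *ᵥ y') ≤ x ⬝ᵥ (B *ᵥ y))

/-- The matrix `I^π` whose `i`-th row is the transpose of the `π(i)`-th
standard unit vector. -/
def permMatrix {n : ℕ} (π : Equiv.Perm (Fin n)) : Matrix (Fin n) (Fin n) ℝ :=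
  Matrix.of fun i j => if j = π i then 1 else 0

/-- The number of orbits of `π` on `{1,…,n}` (cycles of `π`, including fixed
points): the number of distinct `SameCycle`-classes. -/
noncomputable def numOrbits {n : ℕ} (π : Equiv.Perm (Fin n)) : ℕ :=
  {s : Set (Fin n) | ∃ i, s = {j | π.SameCycle i j}}.ncard

open Finset in
noncomputable def unif {n : ℕ} (A : Finset (Fin n)) : Fin n → ℝ :=
  fun i => if i ∈ A then (A.card : ℝ)⁻¹ else 0

def invOn {n : ℕ} (π : Equiv.Perm (Fin n)) (A : Finset (Fin n)) : Prop :=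
  ∀ i, π i ∈ A ↔ i ∈ A

lemma permMatrix_mulVec {n : ℕ} (π : Equiv.Perm (Fin n)) (v : Fin n → ℝ) :
    permMatrix π *ᵥ v = fun i => v (π i) := by
  ext i
  simp [permMatrix, Matrix.mulVec, dotProduct, ite_mul]

lemma unif_nonneg {n : ℕ} (A : Finset (Fin n)) (i : Fin n) : 0 ≤ unif A i := by
  unfold unif; split <;> positivity

lemma sum_ite_mem' {n : ℕ} (A : Finset (Fin n)) (c : ℝ) :
    ∑ i, (if i ∈ A then c else 0) = A.card * c := by
  rw [Finset.sum_ite_mem, Finset.univ_inter, Finset.sum_const, nsmul_eq_mul]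

lemma unif_mixed {n : ℕ} {A : Finset (Fin n)} (hA : A.Nonempty) : IsMixed (unif A) := by
  refine ⟨unif_nonneg A, ?_⟩
  have hc : (A.card : ℝ) ≠ 0 := Nat.cast_ne_zero.2 hA.card_ne_zero
  simp only [unif, sum_ite_mem']
  field_simp

lemma mixed_dot_le {n : ℕ} {x : Fin n → ℝ} (hx : IsMixed x) {v : Fin n → ℝ} {c : ℝ}
    (h : ∀ i, v i ≤ c) : x ⬝ᵥ v ≤ c := by
  calc x ⬝ᵥ v = ∑ i, x i * v i := rfl
    _ ≤ ∑ i, x i * c := Finset.sum_le_sum fun i _ => mul_le_mul_of_nonneg_left (h i) (hx.1 i)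
    _ = c := by rw [← Finset.sum_mul, hx.2, one_mul]

lemma unif_dot_unif {n : ℕ} {A : Finset (Fin n)} (hA : A.Nonempty) :
    unif A ⬝ᵥ unif A = (A.card : ℝ)⁻¹ := by
  have hc : (A.card : ℝ) ≠ 0 := Nat.cast_ne_zero.2 hA.card_ne_zero
  have h : ∀ i : Fin n, unif A i * unif A i
      = (if i ∈ A then (A.card : ℝ)⁻¹ * (A.card:ℝ)⁻¹ else 0) := by
    intro i; unfold unif; split <;> simp
  calc unif A ⬝ᵥ unif A = ∑ i, (if i ∈ A then (A.card : ℝ)⁻¹ * (A.card:ℝ)⁻¹ else 0) :=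
        Finset.sum_congr rfl fun i _ => h i
    _ = A.card * ((A.card : ℝ)⁻¹ * (A.card:ℝ)⁻¹) := sum_ite_mem' ..
    _ = (A.card : ℝ)⁻¹ := by field_simp

lemma image_eq_of_invOn {n : ℕ} {π : Equiv.Perm (Fin n)} {A : Finset (Fin n)}
    (h : invOn π A) : A.image π = A := by
  ext j
  simp only [Finset.mem_image]
  constructor
  · rintro ⟨i, hi, rfl⟩; exact (h i).2 hi
  · intro hj
    exact ⟨π.symm j, by
      have := (h (π.symm j)); rw [Equiv.apply_symm_apply] at this; exact this.1 hj, by simp⟩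

lemma nash_of_invOn {n : ℕ} {π : Equiv.Perm (Fin n)} {A : Finset (Fin n)}
    (hA : A.Nonempty) (hinv : invOn π A) :
    IsNash (1 : Matrix (Fin n) (Fin n) ℝ) (permMatrix π) (unif A) (unif A) := by
  have hc : (A.card : ℝ) ≠ 0 := Nat.cast_ne_zero.2 hA.card_ne_zero
  have hc0 : (0:ℝ) ≤ (A.card : ℝ)⁻¹ := by positivity
  refine ⟨unif_mixed hA, unif_mixed hA, ?_, ?_⟩
  · intro x' hx'
    rw [Matrix.one_mulVec, unif_dot_unif hA]
    exact mixed_dot_le hx' fun i => by unfold unif; split <;> simp [hc0]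
  · intro y' hy'
    rw [permMatrix_mulVec, permMatrix_mulVec]
    have key : ∀ y' : Fin n → ℝ, (unif A ⬝ᵥ fun i => y' (π i))
        = (A.card : ℝ)⁻¹ * ∑ j ∈ A, y' j := by
      intro z
      have h1 : ∀ i : Fin n, unif A i * z (π i)
          = (if i ∈ A then (A.card : ℝ)⁻¹ * z (π i) else 0) := by
        intro i; unfold unif; split <;> simp
      calc (unif A ⬝ᵥ fun i => z (π i))
          = ∑ i, (if i ∈ A then (A.card : ℝ)⁻¹ * z (π i) else 0) :=
            Finset.sum_congr rfl fun i _ => h1 i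
        _ = ∑ i ∈ A, (A.card : ℝ)⁻¹ * z (π i) := by
            rw [Finset.sum_ite_mem, Finset.univ_inter]
        _ = (A.card : ℝ)⁻¹ * ∑ i ∈ A, z (π i) := by rw [Finset.mul_sum]
        _ = (A.card : ℝ)⁻¹ * ∑ j ∈ A.image π, z j := by
            rw [Finset.sum_image (fun a _ b _ h => π.injective h)]
        _ = (A.card : ℝ)⁻¹ * ∑ j ∈ A, z j := by rw [image_eq_of_invOn hinv]
    rw [key, key]
    have h2 : ∑ j ∈ A, unif A j = 1 := by
      have : ∀ j ∈ A, unif A j = (A.card : ℝ)⁻¹ := fun j hj => if_pos hj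
      rw [Finset.sum_congr rfl this, Finset.sum_const, nsmul_eq_mul]
      field_simp
    have h3 : ∑ j ∈ A, y' j ≤ 1 := by
      rw [← hy'.2]
      exact Finset.sum_le_sum_of_subset_of_nonneg (Finset.subset_univ A)
        (fun i _ _ => hy'.1 i)
    rw [h2]
    exact mul_le_mul_of_nonneg_left h3 hc0

lemma invOn_unif_of_nash {n : ℕ} {π : Equiv.Perm (Fin n)} {x y : Fin n → ℝ}
    (h : IsNash (1 : Matrix (Fin n) (Fin n) ℝ) (permMatrix π) x y) :
    ∃ A : Finset (Fin n), A.Nonempty ∧ invOn π A ∧ x = unif A ∧ y = unif A := by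
  obtain ⟨⟨hx0, hx1⟩, ⟨hy0, hy1⟩, hrow, hcol⟩ := h
  rw [Matrix.one_mulVec] at hrow
  set m : ℝ := x ⬝ᵥ y with hm
  set v : ℝ := x ⬝ᵥ (permMatrix π *ᵥ y) with hv
  -- pure strategies
  have epure : ∀ i : Fin n, IsMixed (fun j => if j = i then (1:ℝ) else 0) := by
    intro i
    refine ⟨fun j => by dsimp only; split <;> norm_num, by simp⟩
  have hylem : ∀ i, y i ≤ m := by
    intro i
    have := hrow _ (epure i)
    simpa [dotProduct, ite_mul] using this
  have hxlem : ∀ i, x i ≤ v := by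
    intro i
    have := hcol _ (epure (π i))
    rw [_root_.permMatrix_mulVec] at this
    have hval : (x ⬝ᵥ fun k => if π k = π i then (1:ℝ) else 0) = x i := by
      have : ∀ k : Fin n, (if π k = π i then (1:ℝ) else 0) = if k = i then 1 else 0 := by
        intro k; simp [π.injective.eq_iff]
      simp only [dotProduct, this, mul_ite, mul_one, mul_zero]
      simp
    rwa [hval] at this
  have hveq : v = ∑ i, x i * y (π i) := by
    rw [hv, _root_.permMatrix_mulVec]; rfl
  -- key1 : x i > 0 → y i = m
  have key1 : ∀ i, 0 < x i → y i = m := by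
    intro i hi
    have hsum : ∑ j, x j * (m - y j) = 0 := by
      simp only [mul_sub, Finset.sum_sub_distrib]
      rw [← Finset.sum_mul, hx1, one_mul, hm]
      simp [dotProduct]
    have hnn : ∀ j ∈ Finset.univ, 0 ≤ x j * (m - y j) :=
      fun j _ => mul_nonneg (hx0 j) (sub_nonneg.2 (hylem j))
    have := (Finset.sum_eq_zero_iff_of_nonneg hnn).1 hsum i (Finset.mem_univ i)
    have := mul_eq_zero.1 this
    rcases this with h | h
    · exact absurd h (ne_of_gt hi)
    · linarith [sub_eq_zero.1 h]
  -- key2 : y (π i) > 0 → x i = v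
  have key2 : ∀ i, 0 < y (π i) → x i = v := by
    intro i hi
    have hsumy : ∑ j, y (π j) = 1 := by
      rw [← hy1]; exact Equiv.sum_comp π y
    have hsum : ∑ j, y (π j) * (v - x j) = 0 := by
      simp only [mul_sub, Finset.sum_sub_distrib]
      rw [← Finset.sum_mul, hsumy, one_mul, hveq]
      have : ∀ j : Fin n, y (π j) * x j = x j * y (π j) := fun j => mul_comm _ _
      rw [Finset.sum_congr rfl fun j _ => this j]
      ring
    have hnn : ∀ j ∈ Finset.univ, 0 ≤ y (π j) * (v - x j) :=
      fun j _ => mul_nonneg (hy0 (π j)) (sub_nonneg.2 (hxlem j))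
    have := (Finset.sum_eq_zero_iff_of_nonneg hnn).1 hsum i (Finset.mem_univ i)
    rcases mul_eq_zero.1 this with h | h
    · exact absurd h (ne_of_gt hi)
    · linarith [sub_eq_zero.1 h]
  -- positivity of m and v
  have hyex : ∃ i, 0 < y i := by
    by_contra hcon
    push_neg at hcon
    have : ∀ i, y i = 0 := fun i => le_antisymm (hcon i) (hy0 i)
    simp [this] at hy1
  have hxex : ∃ i, 0 < x i := by
    by_contra hcon
    push_neg at hcon
    have : ∀ i, x i = 0 := fun i => le_antisymm (hcon i) (hx0 i)
    simp [this] at hx1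
  have hmpos : 0 < m := lt_of_lt_of_le hyex.choose_spec (hylem _)
  have hvpos : 0 < v := lt_of_lt_of_le hxex.choose_spec (hxlem _)
  -- the support of y
  set A : Finset (Fin n) := Finset.univ.filter (fun i => 0 < y i) with hA
  have memA : ∀ i, i ∈ A ↔ 0 < y i := by intro i; simp [hA]
  have hAne : A.Nonempty := ⟨hyex.choose, (memA _).2 hyex.choose_spec⟩
  -- supp x ⊆ A
  have c1 : ∀ i, 0 < x i → i ∈ A := fun i hi => (memA i).2 (key1 i hi ▸ hmpos)
  -- π i ∈ A → i ∈ A chain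
  have c2 : ∀ i, π i ∈ A → i ∈ A := by
    intro i hi
    exact c1 i (key2 i ((memA _).1 hi) ▸ hvpos)
  -- invariance via cardinality
  have hsup : A ⊆ A.image π := by
    intro j hj
    have hij : π (π.symm j) = j := π.apply_symm_apply j
    have : π.symm j ∈ A := c2 _ (by rwa [hij])
    exact Finset.mem_image.2 ⟨π.symm j, this, hij⟩
  have himg : A = A.image π :=
    Finset.eq_of_subset_of_card_le hsup
      (le_of_eq (Finset.card_image_of_injective A π.injective))
  have hinv : invOn π A := by
    intro i
    refine ⟨c2 i, fun hi => ?_⟩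
    rw [himg]
    exact Finset.mem_image_of_mem π hi
  -- values on the support
  have hxA : ∀ i ∈ A, x i = v := fun i hi => key2 i ((memA _).1 ((hinv i).2 hi))
  have hxA' : ∀ i, i ∉ A → x i = 0 := by
    intro i hi
    by_contra hne
    exact hi (c1 i (lt_of_le_of_ne (hx0 i) (Ne.symm hne)))
  have hyA : ∀ i ∈ A, y i = m := by
    intro i hi
    exact key1 i (by rw [hxA i hi]; exact hvpos)
  have hyA' : ∀ i, i ∉ A → y i = 0 := by
    intro i hi
    by_contra hne
    exact hi ((memA i).2 (lt_of_le_of_ne (hy0 i) (Ne.symm hne)))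
  have hcard : (A.card : ℝ) ≠ 0 := Nat.cast_ne_zero.2 hAne.card_ne_zero
  have hxsum : (A.card : ℝ) * v = 1 := by
    rw [← hx1]
    rw [← sum_ite_mem' A v]
    exact (Finset.sum_congr rfl fun i _ => by
      by_cases hi : i ∈ A
      · rw [if_pos hi]; exact hxA i hi
      · rw [if_neg hi]; exact hxA' i hi).symm
  have hysum : (A.card : ℝ) * m = 1 := by
    rw [← hy1]
    rw [← sum_ite_mem' A m]
    exact (Finset.sum_congr rfl fun i _ => by
      by_cases hi : i ∈ A
      · rw [if_pos hi]; exact hyA i hi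
      · rw [if_neg hi]; exact hyA' i hi).symm
  have hvval : v = (A.card : ℝ)⁻¹ := by field_simp at hxsum ⊢; linarith
  have hmval : m = (A.card : ℝ)⁻¹ := by field_simp at hysum ⊢; linarith
  refine ⟨A, hAne, hinv, ?_, ?_⟩
  · funext i
    unfold unif
    by_cases hi : i ∈ A
    · rw [if_pos hi, hxA i hi, hvval]
    · rw [if_neg hi, hxA' i hi]
  · funext i
    unfold unif
    by_cases hi : i ∈ A
    · rw [if_pos hi, hyA i hi, hmval]
    · rw [if_neg hi, hyA' i hi]

instance {n : ℕ} (π : Equiv.Perm (Fin n)) (A : Finset (Fin n)) : Decidable (invOn π A) :=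
  inferInstanceAs (Decidable (∀ i, π i ∈ A ↔ i ∈ A))

lemma unif_injOn {n : ℕ} {A A' : Finset (Fin n)} (hA : A.Nonempty) (hA' : A'.Nonempty)
    (h : unif A = unif A') : A = A' := by
  have key : ∀ (B : Finset (Fin n)), B.Nonempty → ∀ i, i ∈ B ↔ unif B i ≠ 0 := by
    intro B hB i
    have : (B.card : ℝ)⁻¹ ≠ 0 := by
      have : (B.card : ℝ) ≠ 0 := Nat.cast_ne_zero.2 hB.card_ne_zero
      exact inv_ne_zero this
    unfold unif
    by_cases hi : i ∈ B <;> simp [hi, this]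
  ext i
  rw [key A hA i, key A' hA' i, h]

lemma nash_ncard {n : ℕ} (π : Equiv.Perm (Fin n)) :
    {p : (Fin n → ℝ) × (Fin n → ℝ) |
        IsNash (1 : Matrix (Fin n) (Fin n) ℝ) (permMatrix π) p.1 p.2}.ncard
      = (Finset.univ.filter (fun A : Finset (Fin n) => A.Nonempty ∧ invOn π A)).card := by
  have hset : {p : (Fin n → ℝ) × (Fin n → ℝ) |
        IsNash (1 : Matrix (Fin n) (Fin n) ℝ) (permMatrix π) p.1 p.2}
      = (fun A : Finset (Fin n) => (unif A, unif A)) ''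
          ↑(Finset.univ.filter (fun A : Finset (Fin n) => A.Nonempty ∧ invOn π A)) := by
    ext ⟨x, y⟩
    simp only [Set.mem_setOf_eq, Set.mem_image, Finset.coe_filter, Set.mem_setOf_eq,
      Finset.mem_univ, true_and]
    constructor
    · intro h
      obtain ⟨A, hAne, hinv, hx, hy⟩ := invOn_unif_of_nash h
      exact ⟨A, ⟨hAne, hinv⟩, by rw [hx, hy]⟩
    · rintro ⟨A, ⟨hAne, hinv⟩, hp⟩
      have hx : x = unif A := (congrArg Prod.fst hp).symm
      have hy : y = unif A := (congrArg Prod.snd hp).symm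
      rw [hx, hy]
      exact nash_of_invOn hAne hinv
  rw [hset, Set.ncard_image_of_injOn, Set.ncard_coe_finset]
  intro A hA B hB hAB
  simp only [Finset.coe_filter, Set.mem_setOf_eq] at hA hB
  exact unif_injOn hA.2.1 hB.2.1 (congrArg Prod.fst hAB)

def invPermEquiv {n : ℕ} (A : Finset (Fin n)) :
    {π : Equiv.Perm (Fin n) // invOn π A} ≃
      Equiv.Perm {i : Fin n // i ∈ A} × Equiv.Perm {i : Fin n // ¬ i ∈ A} where
  toFun σ := (σ.1.subtypePerm (fun i => (σ.2 i)),
              σ.1.subtypePerm (fun i => not_congr (σ.2 i)))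
  invFun p := ⟨Equiv.Perm.subtypeCongr p.1 p.2, by
    intro i
    by_cases hi : i ∈ A
    · rw [Equiv.Perm.subtypeCongr.left_apply p.1 p.2 hi]
      simpa using hi
    · rw [Equiv.Perm.subtypeCongr.right_apply p.1 p.2 hi]
      have := (p.2 ⟨i, hi⟩).2
      simpa [hi] using this⟩
  left_inv σ := by
    ext i
    by_cases hi : i ∈ A
    · simp [Equiv.Perm.subtypeCongr.left_apply _ _ hi, Equiv.Perm.subtypePerm]
    · simp [Equiv.Perm.subtypeCongr.right_apply _ _ hi, Equiv.Perm.subtypePerm]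
  right_inv p := by
    refine Prod.ext ?_ ?_
    · ext ⟨i, hi⟩
      simp [Equiv.Perm.subtypePerm, Equiv.Perm.subtypeCongr.left_apply _ _ hi]
    · ext ⟨i, hi⟩
      simp [Equiv.Perm.subtypePerm, Equiv.Perm.subtypeCongr.right_apply _ _ hi]

lemma card_invOn {n : ℕ} (A : Finset (Fin n)) :
    (Finset.univ.filter (fun π : Equiv.Perm (Fin n) => invOn π A)).card
      = A.card.factorial * (n - A.card).factorial := by
  rw [← Fintype.card_subtype]
  rw [Fintype.card_congr (invPermEquiv A), Fintype.card_prod,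
    Fintype.card_perm, Fintype.card_perm, Fintype.card_coe, Fintype.card_subtype_compl,
    Fintype.card_coe, Fintype.card_fin]

lemma sum_nonempty_inv {n : ℕ} :
    ∑ π : Equiv.Perm (Fin n),
        (Finset.univ.filter (fun A : Finset (Fin n) => A.Nonempty ∧ invOn π A)).card
      = n * n.factorial := by
  have step1 : ∑ π : Equiv.Perm (Fin n),
        (Finset.univ.filter (fun A : Finset (Fin n) => A.Nonempty ∧ invOn π A)).card
      = ∑ A : Finset (Fin n), ∑ π : Equiv.Perm (Fin n),
          (if A.Nonempty ∧ invOn π A then 1 else 0) := by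
    rw [Finset.sum_comm]
    exact Finset.sum_congr rfl fun π _ => Finset.card_filter _ _
  have step2 : ∀ A : Finset (Fin n),
      (∑ π : Equiv.Perm (Fin n), if A.Nonempty ∧ invOn π A then 1 else 0)
        = if A.Nonempty then A.card.factorial * (n - A.card).factorial else 0 := by
    intro A
    by_cases hA : A.Nonempty
    · rw [if_pos hA, ← card_invOn A, Finset.card_filter]
      exact Finset.sum_congr rfl fun π _ => by simp [hA]
    · rw [if_neg hA]
      exact Finset.sum_eq_zero fun π _ => by simp [hA]
  rw [step1, Finset.sum_congr rfl fun A _ => step2 A]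
  -- split off the empty set
  rw [← Finset.sum_filter]
  have htot : ∑ A : Finset (Fin n), A.card.factorial * (n - A.card).factorial
      = (n + 1) * n.factorial := by
    rw [← Finset.powerset_univ, Finset.sum_powerset]
    have hcu : (Finset.univ (α := Fin n)).card = n := Finset.card_univ.trans (Fintype.card_fin n)
    have inner : ∀ j ∈ Finset.range (n + 1),
        (∑ A ∈ Finset.powersetCard j (Finset.univ (α := Fin n)),
          A.card.factorial * (n - A.card).factorial) = n.factorial := by
      intro j hj
      have hjn : j ≤ n := Nat.lt_succ_iff.1 (Finset.mem_range.1 hj)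
      have hval : ∀ A ∈ Finset.powersetCard j (Finset.univ (α := Fin n)),
          A.card.factorial * (n - A.card).factorial = j.factorial * (n - j).factorial := by
        intro A hA
        rw [(Finset.mem_powersetCard.1 hA).2]
      rw [Finset.sum_congr rfl hval, Finset.sum_const, Finset.card_powersetCard, hcu,
        smul_eq_mul, ← mul_assoc]
      exact Nat.choose_mul_factorial_mul_factorial hjn
    rw [hcu]
    rw [Finset.sum_congr rfl inner, Finset.sum_const, Finset.card_range, smul_eq_mul]
  have hsplit := Finset.sum_filter_add_sum_filter_not Finset.univ
    (fun A : Finset (Fin n) => A.Nonempty)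
    (fun A : Finset (Fin n) => A.card.factorial * (n - A.card).factorial)
  have hemptyset : Finset.univ.filter (fun A : Finset (Fin n) => ¬ A.Nonempty) = {∅} := by
    ext A
    simp [Finset.not_nonempty_iff_eq_empty]
  rw [hemptyset, Finset.sum_singleton] at hsplit
  simp only [Finset.card_empty, Nat.factorial_zero, Nat.sub_zero, one_mul] at hsplit
  rw [htot] at hsplit
  have : (n + 1) * n.factorial = n * n.factorial + n.factorial := by ring
  omega

def scSetoid {n : ℕ} (π : Equiv.Perm (Fin n)) : Setoid (Fin n) :=
  ⟨π.SameCycle, ⟨Equiv.Perm.SameCycle.refl π, Equiv.Perm.SameCycle.symm,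
    Equiv.Perm.SameCycle.trans⟩⟩

noncomputable instance {n : ℕ} (π : Equiv.Perm (Fin n)) : Fintype (Quotient (scSetoid π)) := by
  classical
  exact Quotient.fintype (scSetoid π)

lemma class_eq_of_sameCycle {n : ℕ} {π : Equiv.Perm (Fin n)} {a b : Fin n}
    (h : π.SameCycle a b) : {j | π.SameCycle a j} = {j | π.SameCycle b j} := by
  ext j
  exact ⟨fun hj => h.symm.trans hj, fun hj => h.trans hj⟩

lemma numOrbits_eq_card {n : ℕ} (π : Equiv.Perm (Fin n)) :
    numOrbits π = Fintype.card (Quotient (scSetoid π)) := by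
  classical
  set h : Quotient (scSetoid π) → Set (Fin n) :=
    Quotient.lift (fun i => {j | π.SameCycle i j})
      (fun a b hab => class_eq_of_sameCycle hab) with hh
  have hinj : Function.Injective h := by
    intro q q'
    induction q using Quotient.inductionOn
    induction q' using Quotient.inductionOn
    rename_i a b
    intro heq
    apply Quotient.sound
    show π.SameCycle a b
    have hb : b ∈ {j | π.SameCycle b j} := Equiv.Perm.SameCycle.refl π b
    have : b ∈ {j | π.SameCycle a j} := by
      have : h ⟦a⟧ = h ⟦b⟧ := heq
      simp only [hh, Quotient.lift_mk] at this
      rw [this]; exact hb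
    exact this
  have hrange : {s : Set (Fin n) | ∃ i, s = {j | π.SameCycle i j}} = Set.range h := by
    ext s
    constructor
    · rintro ⟨i, rfl⟩; exact ⟨⟦i⟧, rfl⟩
    · rintro ⟨q, rfl⟩
      induction q using Quotient.inductionOn
      rename_i a
      exact ⟨a, rfl⟩
  rw [numOrbits, hrange, ← Set.image_univ, Set.ncard_image_of_injective _ hinj,
    Set.ncard_univ, Nat.card_eq_fintype_card]

lemma invOn_zpow_mem {n : ℕ} {π : Equiv.Perm (Fin n)} {A : Finset (Fin n)}
    (h : invOn π A) : ∀ (k : ℤ) (j : Fin n), (π ^ k) j ∈ A ↔ j ∈ A := by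
  intro k
  induction k using Int.induction_on with
  | zero => simp
  | succ k ih =>
      intro j
      have : (π ^ ((k : ℤ) + 1)) j = (π ^ (k : ℤ)) (π j) := by
        rw [_root_.zpow_add_one]
        rfl
      rw [this, ih (π j), h j]
  | pred k ih =>
      intro j
      have : (π ^ (-(k : ℤ) - 1)) j = (π ^ (-(k : ℤ))) (π⁻¹ j) := by
        rw [_root_.zpow_sub_one]
        rfl
      rw [this, ih (π⁻¹ j)]
      have h2 := h (π⁻¹ j)
      rw [show π (π⁻¹ j) = j from π.apply_symm_apply j] at h2
      exact h2.symm

lemma sat_of_invOn {n : ℕ} {π : Equiv.Perm (Fin n)} {A : Finset (Fin n)}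
    (h : invOn π A) {a b : Fin n} (hab : π.SameCycle a b) : a ∈ A ↔ b ∈ A := by
  obtain ⟨k, hk⟩ := hab
  rw [← hk]
  exact (invOn_zpow_mem h k a).symm

lemma card_invOn_eq_pow {n : ℕ} (π : Equiv.Perm (Fin n)) :
    (Finset.univ.filter (fun A : Finset (Fin n) => invOn π A)).card
      = 2 ^ numOrbits π := by
  classical
  rw [numOrbits_eq_card]
  set Q := Quotient (scSetoid π)
  set g : Finset Q → Finset (Fin n) :=
    fun T => Finset.univ.filter (fun i => Quotient.mk (scSetoid π) i ∈ T) with hg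
  have hginj : Function.Injective g := by
    intro T T' heq
    ext q
    induction q using Quotient.inductionOn
    rename_i a
    have h1 : a ∈ g T ↔ a ∈ g T' := by rw [heq]
    simpa [hg] using h1
  have himg : Finset.univ.image g
      = Finset.univ.filter (fun A : Finset (Fin n) => invOn π A) := by
    ext A
    simp only [Finset.mem_image, Finset.mem_univ, true_and, Finset.mem_filter]
    constructor
    · rintro ⟨T, rfl⟩
      intro i
      have hsc : π.SameCycle i (π i) := ⟨1, rfl⟩
      have hq : Quotient.mk (scSetoid π) (π i) = Quotient.mk (scSetoid π) i :=
        Quotient.sound (Equiv.Perm.SameCycle.symm hsc)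
      simp [hg, hq]
    · intro hA
      refine ⟨A.image (fun i => Quotient.mk (scSetoid π) i), ?_⟩
      ext i
      simp only [hg, Finset.mem_filter, Finset.mem_univ, true_and, Finset.mem_image]
      constructor
      · rintro ⟨j, hj, hq⟩
        have hsc : π.SameCycle j i := Quotient.exact hq
        exact (sat_of_invOn hA hsc).1 hj
      · intro hi
        exact ⟨i, hi, rfl⟩
  calc (Finset.univ.filter (fun A : Finset (Fin n) => invOn π A)).card
      = (Finset.univ.image g).card := by rw [himg]
    _ = (Finset.univ : Finset (Finset Q)).card := Finset.card_image_of_injective _ hginj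
    _ = Fintype.card (Finset Q) := rfl
    _ = 2 ^ Fintype.card Q := Fintype.card_finset

lemma card_nonempty_invOn_eq {n : ℕ} (π : Equiv.Perm (Fin n)) :
    (Finset.univ.filter (fun A : Finset (Fin n) => A.Nonempty ∧ invOn π A)).card
      = 2 ^ numOrbits π - 1 := by
  classical
  have hsplit : Finset.univ.filter (fun A : Finset (Fin n) => A.Nonempty ∧ invOn π A)
      = (Finset.univ.filter (fun A : Finset (Fin n) => invOn π A)).erase ∅ := by
    ext A
    simp only [Finset.mem_filter, Finset.mem_univ, true_and, Finset.mem_erase,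
      Finset.nonempty_iff_ne_empty]
  have hmem : ∅ ∈ Finset.univ.filter (fun A : Finset (Fin n) => invOn π A) :=
    Finset.mem_filter.2 ⟨Finset.mem_univ _, fun i => by simp⟩
  rw [hsplit, Finset.card_erase_of_mem hmem, card_invOn_eq_pow]

/-- A random `n × n` permutation game has in expectation `n` Nash equilibria:
summed over all `n!` permutations, the total number of Nash equilibria is
`n · n!`; equivalently `∑_{π ∈ S_n} (2^{c(π)} − 1) = n · n!`. -/
theorem stmt8 {n : ℕ} :
    (∑ π : Equiv.Perm (Fin n),
        {p : (Fin n → ℝ) × (Fin n → ℝ) |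
          IsNash (1 : Matrix (Fin n) (Fin n) ℝ) (permMatrix π) p.1 p.2}.ncard) =
      n * n.factorial ∧
    (∑ π : Equiv.Perm (Fin n), (2 ^ numOrbits π - 1)) = n * n.factorial := by
  constructor
  · rw [Finset.sum_congr rfl fun π _ => nash_ncard π]
    exact sum_nonempty_inv
  · rw [Finset.sum_congr rfl fun π _ => (card_nonempty_invOn_eq π).symm]
    exact sum_nonempty_inv
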